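/- Let α be a nonnegative random variable taking values in [0,H) (0 < H ≤ ∞) with absolutely continuous distribution function F, density f, survival function F̄ = 1 - F, and finite mean Eα > c ≥ 0. In the n-firm Cournot game with payoffs π_i(x_1,…,x_n) = x_i·(E[(α - Σ_j x_j)_+] - c), if (x*,…,x*) with x* > 0 is a pure Nash equilibrium, then x* satisfies the first-order condition ∫_{n x*}^{H} u f(u) du - c = (n+1) x* F̄(n x*). -/

import Mathlib

open MeasureTheory Set Filter Function

noncomputable section

/-- Expected payoff of firm `i` in the `n`-firm Cournot game with stochastic
demand intercept `α` and constant marginal cost `c`. -/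
def payoff {Ω : Type*} [MeasurableSpace Ω] (μ : Measure Ω) (α : Ω → ℝ) (c : ℝ)
    {n : ℕ} (x : Fin n → ℝ) (i : Fin n) : ℝ :=
  x i * ((∫ ω, max (α ω - ∑ j, x j) 0 ∂μ) - c)

/-- Pure Nash equilibrium with nonnegative outputs. -/
def IsNash {Ω : Type*} [MeasurableSpace Ω] (μ : Measure Ω) (α : Ω → ℝ) (c : ℝ)
    {n : ℕ} (x : Fin n → ℝ) : Prop :=
  (∀ i, 0 ≤ x i) ∧
    ∀ i : Fin n, ∀ y : ℝ, 0 ≤ y →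
      payoff μ α c (Function.update x i y) i ≤ payoff μ α c x i

namespace CournotFOC

open Topology NNReal ENNReal

variable {Ω : Type*} [MeasurableSpace Ω] {μ : Measure Ω} [IsProbabilityMeasure μ] {α : Ω → ℝ}

lemma integA (hi : Integrable α μ) (t : ℝ) :
    Integrable (fun ω => max (α ω - t) 0) μ :=
  (hi.sub (integrable_const t)).pos_part

lemma boundB (hm : Measurable α) (hi : Integrable α μ) {a b : ℝ} (hab : a ≤ b) :
    (b - a) * (μ {ω | b < α ω}).toReal
      ≤ (∫ ω, max (α ω - a) 0 ∂μ) - ∫ ω, max (α ω - b) 0 ∂μ ∧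
    (∫ ω, max (α ω - a) 0 ∂μ) - ∫ ω, max (α ω - b) 0 ∂μ
      ≤ (b - a) * (μ {ω | a < α ω}).toReal := by
  have hsb : MeasurableSet {ω | b < α ω} := measurableSet_lt measurable_const hm
  have hsa : MeasurableSet {ω | a < α ω} := measurableSet_lt measurable_const hm
  have hint : Integrable (fun ω => max (α ω - a) 0 - max (α ω - b) 0) μ :=
    (integA hi a).sub (integA hi b)
  rw [← integral_sub (integA hi a) (integA hi b)]
  constructor
  · have h1 : ∫ ω, Set.indicator {ω | b < α ω} (fun _ => b - a) ω ∂μ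
        ≤ ∫ ω, max (α ω - a) 0 - max (α ω - b) 0 ∂μ := by
      apply integral_mono ((integrable_const (b - a)).indicator hsb) hint
      intro ω
      by_cases h : ω ∈ {ω | b < α ω}
      · rw [Set.indicator_of_mem h]
        have hb : b < α ω := h
        have e1 : max (α ω - a) 0 = α ω - a := max_eq_left (by linarith)
        have e2 : max (α ω - b) 0 = α ω - b := max_eq_left (by linarith)
        dsimp only; rw [e1, e2]; linarith
      · rw [Set.indicator_of_notMem h]
        have : max (α ω - b) 0 ≤ max (α ω - a) 0 :=
          max_le_max (by linarith) le_rfl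
        dsimp only; linarith
    rwa [integral_indicator_const _ hsb, smul_eq_mul, mul_comm] at h1
  · have h1 : ∫ ω, max (α ω - a) 0 - max (α ω - b) 0 ∂μ
        ≤ ∫ ω, Set.indicator {ω | a < α ω} (fun _ => b - a) ω ∂μ := by
      apply integral_mono hint ((integrable_const (b - a)).indicator hsa)
      intro ω
      by_cases h : ω ∈ {ω | a < α ω}
      · rw [Set.indicator_of_mem h]
        have ha : a < α ω := h
        rcases le_or_gt (α ω) b with hb | hb
        · have e2 : max (α ω - b) 0 = 0 := max_eq_right (by linarith)
          have e3 : max (α ω - a) 0 = α ω - a := max_eq_left (by linarith)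
          dsimp only; rw [e2, e3]; linarith
        · have e2 : max (α ω - b) 0 = α ω - b := max_eq_left (by linarith)
          have e3 : max (α ω - a) 0 = α ω - a := max_eq_left (by linarith)
          dsimp only; rw [e2, e3]; linarith
      · rw [Set.indicator_of_notMem h]
        have ha : ¬ a < α ω := h
        push_neg at ha
        have e3 : max (α ω - a) 0 = 0 := max_eq_right (by linarith)
        have e2 : max (α ω - b) 0 = 0 := max_eq_right (by linarith)
        dsimp only; rw [e2, e3]; linarith
    rwa [integral_indicator_const _ hsa, smul_eq_mul, mul_comm] at h1

lemma derivC (hm : Measurable α) (hi : Integrable α μ) {Fb : ℝ → ℝ}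
    (hFb : ∀ s, Fb s = (μ {ω | s < α ω}).toReal) {t : ℝ} (hcont : ContinuousAt Fb t) :
    HasDerivAt (fun s => ∫ ω, max (α ω - s) 0 ∂μ) (-(Fb t)) t := by
  set G : ℝ → ℝ := fun s => ∫ ω, max (α ω - s) 0 ∂μ with hG
  rw [hasDerivAt_iff_isLittleO_nhds_zero, Asymptotics.isLittleO_iff]
  intro ε hε
  have key : ∀ h : ℝ, |G (t + h) - G t + h * Fb t| ≤ |h| * |Fb (t + h) - Fb t| := by
    intro h
    rcases lt_trichotomy h 0 with hh | hh | hh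
    · obtain ⟨hlo, hhi⟩ := boundB hm hi (a := t + h) (b := t) (by linarith)
      simp only [← hFb] at hlo hhi
      have e1 : 0 ≤ G (t + h) - G t + h * Fb t := by
        simp only [hG]; nlinarith
      have e2 : G (t + h) - G t + h * Fb t ≤ (-h) * (Fb (t + h) - Fb t) := by
        simp only [hG]; nlinarith
      rw [abs_of_nonneg e1]
      calc G (t + h) - G t + h * Fb t ≤ (-h) * (Fb (t + h) - Fb t) := e2
        _ ≤ |h| * |Fb (t + h) - Fb t| := by
            rw [abs_of_neg hh]
            exact mul_le_mul_of_nonneg_left (le_abs_self _) (by linarith)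
    · simp [hh]
    · obtain ⟨hlo, hhi⟩ := boundB hm hi (a := t) (b := t + h) (by linarith)
      simp only [← hFb] at hlo hhi
      have e1 : 0 ≤ G (t + h) - G t + h * Fb t := by
        simp only [hG]; nlinarith
      have e2 : G (t + h) - G t + h * Fb t ≤ h * (Fb t - Fb (t + h)) := by
        simp only [hG]; nlinarith
      rw [abs_of_nonneg e1]
      calc G (t + h) - G t + h * Fb t ≤ h * (Fb t - Fb (t + h)) := e2
        _ ≤ |h| * |Fb (t + h) - Fb t| := by
            rw [abs_of_pos hh, abs_sub_comm]
            exact mul_le_mul_of_nonneg_left (le_abs_self _) (by linarith)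
  have hcont' : Tendsto (fun h : ℝ => |Fb (t + h) - Fb t|) (𝓝 0) (𝓝 0) := by
    have h1 : Tendsto (fun h : ℝ => t + h) (𝓝 0) (𝓝 t) :=
      (continuous_add_left t).tendsto' 0 t (add_zero t)
    have h2 := (hcont.tendsto.comp h1).sub (tendsto_const_nhds (x := Fb t))
    simpa using h2.abs
  filter_upwards [hcont' (Iic_mem_nhds hε)] with h hh
  simp only [smul_eq_mul, Real.norm_eq_abs]
  calc |G (t + h) - G t - h * (-(Fb t))| = |G (t + h) - G t + h * Fb t| := by ring_nf
    _ ≤ |h| * |Fb (t + h) - Fb t| := key h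
    _ ≤ ε * |h| := by
        rw [mul_comm]
        exact mul_le_mul_of_nonneg_right hh (abs_nonneg _)

end CournotFOC

open Topology NNReal ENNReal CournotFOC

/-- If `(x*, …, x*)` with `x* > 0` is a pure Nash equilibrium, then `x*` satisfies
the first-order condition `∫_{n x*}^H u f(u) du - c = (n+1) x* F̄(n x*)`. -/
theorem stmt0 {Ω : Type*} [MeasurableSpace Ω] (μ : Measure Ω) [IsProbabilityMeasure μ]
    (α : Ω → ℝ) (hαmeas : Measurable α)
    (H : EReal) (hH : 0 < H)
    (hval : ∀ᵐ ω ∂μ, 0 ≤ α ω ∧ (α ω : EReal) < H)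
    (hαint : Integrable α μ)
    (F f : ℝ → ℝ)
    (hF : ∀ x : ℝ, F x = (μ {ω | α ω ≤ x}).toReal)
    (hfmeas : Measurable f) (hfnonneg : ∀ x, 0 ≤ f x) (hfint : Integrable f)
    (hdens : ∀ x : ℝ, F x = ∫ u in Iic x, f u)
    (c : ℝ) (hc : 0 ≤ c) (hcE : c < ∫ ω, α ω ∂μ)
    (n : ℕ) (hn : 1 ≤ n)
    (xs : ℝ) (hxs : 0 < xs)
    (hNash : IsNash μ α c (fun _ : Fin n => xs)) :
    (∫ u in Ioi ((n : ℝ) * xs), u * f u) - c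
      = ((n : ℝ) + 1) * xs * (1 - F ((n : ℝ) * xs)) := by
  classical
  set G : ℝ → ℝ := fun s => ∫ ω, max (α ω - s) 0 ∂μ with hGdef
  set Fb : ℝ → ℝ := fun s => (μ {ω | s < α ω}).toReal with hFbdef
  -- Fb = 1 - F
  have hFbF : ∀ s, Fb s = 1 - F s := by
    intro s
    have hset : {ω | s < α ω} = {ω | α ω ≤ s}ᶜ := by ext ω; simp [not_le]
    have hms : MeasurableSet {ω | α ω ≤ s} := hαmeas measurableSet_Iic
    rw [hFbdef]
    dsimp only
    rw [hset, prob_compl_eq_one_sub hms,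
      ENNReal.toReal_sub_of_le prob_le_one ENNReal.one_ne_top, ENNReal.toReal_one, hF]
  -- continuity of F, hence of Fb
  have hFcont : Continuous F := by
    have hrepr : ∀ x : ℝ, F x = F 0 + ∫ u in (0:ℝ)..x, f u := by
      intro x
      rw [hdens x, hdens 0,
        ← intervalIntegral.integral_Iic_sub_Iic hfint.integrableOn hfint.integrableOn]
      ring
    rw [funext hrepr]
    exact continuous_const.add
      (intervalIntegral.continuous_primitive (fun a b => hfint.intervalIntegrable) 0)
  have hFbcont : Continuous Fb := by
    rw [funext hFbF]
    exact continuous_const.sub hFcont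
  -- derivative of G
  have hderiv : ∀ s : ℝ, HasDerivAt G (-(Fb s)) s := fun s =>
    derivC hαmeas hαint (fun _ => rfl) hFbcont.continuousAt
  -- Nash ⇒ first-order condition
  have hfoc : G ((n : ℝ) * xs) - c - xs * Fb ((n : ℝ) * xs) = 0 := by
    set i : Fin n := ⟨0, hn⟩ with hi
    set x : Fin n → ℝ := fun _ : Fin n => xs with hx
    set r : ℝ := ((n : ℝ) - 1) * xs with hr
    have hsum : ∑ j, x j = (n : ℝ) * xs := by
      simp [hx, Finset.sum_const, Finset.card_univ, nsmul_eq_mul]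
    have hsumupd : ∀ y : ℝ, ∑ j, Function.update x i y j = y + r := by
      intro y
      rw [Finset.sum_update_of_mem (Finset.mem_univ i)]
      have hcard : (Finset.univ.erase i).card = n - 1 := by
        rw [Finset.card_erase_of_mem (Finset.mem_univ i), Finset.card_univ, Fintype.card_fin]
      have : ∑ j ∈ Finset.univ.erase i, x j = ((n : ℝ) - 1) * xs := by
        rw [hx]
        rw [Finset.sum_const, hcard, nsmul_eq_mul]
        have : ((n - 1 : ℕ) : ℝ) = (n : ℝ) - 1 := by
          push_cast [Nat.cast_sub hn]; ring
        rw [this]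
      rw [Finset.sdiff_singleton_eq_erase, this, hr]
    have hxr : xs + r = (n : ℝ) * xs := by rw [hr]; ring
    set P : ℝ → ℝ := fun y => y * (G (y + r) - c) with hP
    have hPpay : ∀ y : ℝ, payoff μ α c (Function.update x i y) i = P y := by
      intro y
      rw [payoff, hsumupd y, Function.update_self, hP]
    have hPx : payoff μ α c x i = P xs := by
      rw [payoff, hsum]
      show xs * ((∫ ω, max (α ω - (n : ℝ) * xs) 0 ∂μ) - c) = xs * (G (xs + r) - c)
      rw [hxr]
    have hmax : IsLocalMax P xs := by
      filter_upwards [Ioi_mem_nhds hxs] with y hy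
      rw [← hPpay y, ← hPx]
      exact hNash.2 i y (le_of_lt hy)
    have hinner : HasDerivAt (fun y : ℝ => y + r) 1 xs := (hasDerivAt_id xs).add_const r
    have hDG : HasDerivAt (fun y : ℝ => G (y + r)) (-(Fb (xs + r))) xs := by
      have := (hderiv (xs + r)).comp xs hinner
      rw [mul_one] at this
      exact this
    have hD : HasDerivAt P (1 * (G (xs + r) - c) + xs * (-(Fb (xs + r)))) xs :=
      (hasDerivAt_id xs).mul (hDG.sub_const c)
    have h0 := hmax.hasDerivAt_eq_zero hD
    rw [hxr] at h0
    nlinarith [h0]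
  -- law of α
  have hlaw : Measure.map α μ = volume.withDensity (fun u => ENNReal.ofReal (f u)) := by
    haveI : IsProbabilityMeasure (Measure.map α μ) :=
      Measure.isProbabilityMeasure_map hαmeas.aemeasurable
    refine Measure.ext_of_Iic _ _ (fun a => ?_)
    rw [Measure.map_apply hαmeas measurableSet_Iic,
      withDensity_apply _ measurableSet_Iic,
      ← ofReal_integral_eq_lintegral_ofReal hfint.integrableOn
        (Filter.Eventually.of_forall fun x => hfnonneg x),
      ← hdens, hF]
    exact (ENNReal.ofReal_toReal (measure_ne_top μ _)).symm
  -- total mass 1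
  have hfone : ∫ u, f u = 1 := by
    haveI : IsProbabilityMeasure (Measure.map α μ) :=
      Measure.isProbabilityMeasure_map hαmeas.aemeasurable
    have h1 : (Measure.map α μ) univ = 1 := measure_univ
    rw [hlaw, withDensity_apply _ MeasurableSet.univ, Measure.restrict_univ,
      ← ofReal_integral_eq_lintegral_ofReal hfint
        (Filter.Eventually.of_forall fun x => hfnonneg x)] at h1
    have h2 := congrArg ENNReal.toReal h1
    rwa [ENNReal.toReal_ofReal (integral_nonneg hfnonneg), ENNReal.toReal_one] at h2
  -- tail integral of f
  set t : ℝ := (n : ℝ) * xs with ht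
  have htail : ∫ u in Ioi t, f u = 1 - F t := by
    have := intervalIntegral.integral_Iic_add_Ioi (b := t) hfint.integrableOn hfint.integrableOn
    rw [hfone, ← hdens] at this
    linarith
  -- G via density
  have hGval : G t = (∫ u in Ioi t, u * f u) - t * ∫ u in Ioi t, f u := by
    set f' : ℝ → ℝ≥0 := fun u => Real.toNNReal (f u) with hf'
    have hf'meas : Measurable f' := hfmeas.real_toNNReal
    have hρ : volume.withDensity (fun u => ENNReal.ofReal (f u))
        = volume.withDensity (fun u => (f' u : ℝ≥0∞)) := rfl
    have hcoe : ∀ u, (f' u : ℝ) = f u := fun u => Real.coe_toNNReal _ (hfnonneg u)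
    have hg : Continuous (fun u : ℝ => max (u - t) 0) :=
      (continuous_id.sub continuous_const).max continuous_const
    have h1 : G t = ∫ u, f u * max (u - t) 0 := by
      have := integral_map (μ := μ) hαmeas.aemeasurable
        (hg.aestronglyMeasurable : AEStronglyMeasurable (fun u : ℝ => max (u - t) 0)
          (Measure.map α μ))
      rw [hlaw, hρ, integral_withDensity_eq_integral_smul hf'meas] at this
      rw [hGdef]
      dsimp only
      rw [← this]
      congr 1
      funext u
      rw [NNReal.smul_def, smul_eq_mul, hcoe]
    have h2 : Integrable (fun u => f u * max (u - t) 0) := by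
      have hμint : Integrable (fun ω => max (α ω - t) 0) μ := integA hαint t
      have : Integrable (fun u : ℝ => max (u - t) 0) (Measure.map α μ) := by
        rw [integrable_map_measure (hg.aestronglyMeasurable) hαmeas.aemeasurable]
        exact hμint
      rw [hlaw, hρ, integrable_withDensity_iff_integrable_smul hf'meas] at this
      refine this.congr (Filter.Eventually.of_forall fun u => ?_)
      simp only [NNReal.smul_def, smul_eq_mul, hcoe]
    have h3 : (∫ u, f u * max (u - t) 0) = ∫ u in Ioi t, f u * max (u - t) 0 := by
      refine (setIntegral_eq_integral_of_forall_compl_eq_zero fun u hu => ?_).symm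
      simp only [mem_Ioi, not_lt] at hu
      have : max (u - t) 0 = 0 := max_eq_right (by linarith)
      rw [this, mul_zero]
    have h4 : ∫ u in Ioi t, f u * max (u - t) 0 = ∫ u in Ioi t, u * f u - t * f u := by
      refine setIntegral_congr_fun measurableSet_Ioi fun u hu => ?_
      have : max (u - t) 0 = u - t := max_eq_left (by simp at hu; linarith)
      rw [this]; ring
    have h5 : IntegrableOn (fun u => u * f u) (Ioi t) := by
      have ha : IntegrableOn (fun u => f u * max (u - t) 0) (Ioi t) := h2.integrableOn
      have hb : IntegrableOn (fun u => f u * (u - t)) (Ioi t) := by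
        refine ha.congr_fun (fun u hu => ?_) measurableSet_Ioi
        have : max (u - t) 0 = u - t := max_eq_left (by simp at hu; linarith)
        dsimp only; rw [this]
      have hc : IntegrableOn (fun u => f u * (u - t) + t * f u) (Ioi t) :=
        hb.add (hfint.integrableOn.const_mul t)
      refine hc.congr_fun (fun u _ => by ring) measurableSet_Ioi
    rw [h1, h3, h4, integral_sub h5 (hfint.integrableOn.const_mul t),
      integral_const_mul]
  -- assemble
  rw [hFbF] at hfoc
  rw [hGval, htail] at hfoc
  rw [ht] at hfoc ⊢
  linear_combination hfoc
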